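/- Let (λ_j)_{j∈J} be negative reals, (b_j) nonzero scalars with σ_c = lim 2ln|b_j|/λ_j finite, and t₁ > σ_c. Suppose (q_j)_{j∈J} in L²[0,t₁] is biorthogonal to the family (e^{λ_j t})_{j∈J}, and for every ε > 0 there is K_ε > 0 with ‖q_j‖ ≤ K_ε e^{−λ_j ε}. Then the family { (q_j(t₁ − t)/b_j)·e^{λ_j t₁} : j ∈ J } is a Bessel sequence in L²[0,t₁]: there is M > 0 with ‖Σ_{j∈F} β_j (q_j(t₁−·)/b_j) e^{λ_j t₁}‖² ≤ M² Σ_{j∈F} |β_j|² for all finite F and scalars β_j. -/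

import Mathlib

open Real MeasureTheory Filter


lemma aux_exp_lipschitz {x y : ℝ} (hx : x ≤ 0) (hy : y ≤ 0) :
    |Real.exp x - Real.exp y| ≤ |x - y| := by
  wlog h : y ≤ x generalizing x y
  · rw [abs_sub_comm, abs_sub_comm x y]; exact this hy hx (le_of_not_ge h)
  have h1 : Real.exp x * (1 + (y - x)) ≤ Real.exp y := by
    calc Real.exp x * (1 + (y - x)) ≤ Real.exp x * Real.exp (y - x) := by
          apply mul_le_mul_of_nonneg_left _ (Real.exp_pos x).le
          linarith [Real.add_one_le_exp (y - x)]
      _ = Real.exp y := by rw [← Real.exp_add]; ring_nf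
  have hex : Real.exp x ≤ 1 := by
    calc Real.exp x ≤ Real.exp 0 := Real.exp_le_exp.mpr hx
      _ = 1 := Real.exp_zero
  have hmono : Real.exp y ≤ Real.exp x := Real.exp_le_exp.mpr h
  rw [abs_of_nonneg (by linarith), abs_of_nonneg (by linarith : (0:ℝ) ≤ x - y)]
  nlinarith [Real.exp_pos x]

lemma aux_integrable_mul {μ : Measure ℝ} {f g : ℝ → ℝ} (hf : MemLp f 2 μ) (hg : MemLp g 2 μ) :
    Integrable (fun x => f x * g x) μ := by
  have hb : Integrable (fun x => (f x ^ 2 + g x ^ 2) / 2) μ :=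
    (hf.integrable_sq.add hg.integrable_sq).div_const 2
  refine hb.mono' (hf.aestronglyMeasurable.mul hg.aestronglyMeasurable) ?_
  filter_upwards with x
  rw [Real.norm_eq_abs]
  rcases abs_cases (f x * g x) with ⟨h, _⟩ | ⟨h, _⟩ <;> rw [h] <;>
    nlinarith [sq_nonneg (f x - g x), sq_nonneg (f x + g x)]

lemma aux_integral_cs {μ : Measure ℝ} {f g : ℝ → ℝ} (hf : MemLp f 2 μ) (hg : MemLp g 2 μ) :
    ∫ x, f x * g x ∂μ ≤ Real.sqrt (∫ x, f x ^ 2 ∂μ) * Real.sqrt (∫ x, g x ^ 2 ∂μ) := by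
  set F := hf.toLp f with hF
  set G := hg.toLp g with hG
  have hFG : ∫ x, f x * g x ∂μ = (inner ℝ F G : ℝ) := by
    rw [MeasureTheory.L2.inner_def]
    apply integral_congr_ae
    filter_upwards [hf.coeFn_toLp, hg.coeFn_toLp] with x hx hy
    rw [hx, hy]
    simp [RCLike.inner_apply]; ring
  have hFn : Real.sqrt (∫ x, f x ^ 2 ∂μ) = ‖F‖ := by
    have h1 : ∫ x, f x ^ 2 ∂μ = (inner ℝ F F : ℝ) := by
      rw [MeasureTheory.L2.inner_def]
      apply integral_congr_ae
      filter_upwards [hf.coeFn_toLp] with x hx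
      rw [hx]; simp [RCLike.inner_apply]
    rw [h1, real_inner_self_eq_norm_sq, Real.sqrt_sq (norm_nonneg _)]
  have hGn : Real.sqrt (∫ x, g x ^ 2 ∂μ) = ‖G‖ := by
    have h1 : ∫ x, g x ^ 2 ∂μ = (inner ℝ G G : ℝ) := by
      rw [MeasureTheory.L2.inner_def]
      apply integral_congr_ae
      filter_upwards [hg.coeFn_toLp] with x hx
      rw [hx]; simp [RCLike.inner_apply]
    rw [h1, real_inner_self_eq_norm_sq, Real.sqrt_sq (norm_nonneg _)]
  rw [hFG, hFn, hGn]
  exact real_inner_le_norm F G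


lemma aux_packing {lam : ℕ → ℝ} {ε A : ℝ} (hε : 0 < ε) (hA : 0 < A)
    (hneg : ∀ j, lam j < 0)
    (hsep : ∀ i j, i ≠ j → Real.exp (ε * lam j) / A ≤ |lam i - lam j|)
    (F : Finset ℕ) :
    ∑ j ∈ F, Real.exp (2 * ε * lam j) ≤ 2 * A * Real.exp (ε / (2 * A)) / ε := by
  set r : ℕ → ℝ := fun j => Real.exp (ε * lam j) / (2 * A) with hr
  have hrpos : ∀ j, 0 < r j := fun j => div_pos (Real.exp_pos _) (by linarith)
  have hrlt : ∀ j, r j < 1 / (2 * A) := by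
    intro j
    have h1 : Real.exp (ε * lam j) < 1 := by
      rw [← Real.exp_zero]
      exact Real.exp_lt_exp.mpr (mul_neg_of_pos_of_neg hε (hneg j))
    exact (div_lt_div_iff_of_pos_right (by linarith)).mpr h1
  set l : ℕ → ℝ := fun j => Real.exp (ε * (lam j - r j)) with hl
  set u : ℕ → ℝ := fun j => Real.exp (ε * (lam j + r j)) with hu
  have hlu : ∀ j, l j < u j := by
    intro j
    apply Real.exp_lt_exp.mpr
    have := hrpos j
    nlinarith
  have hub : ∀ j, u j ≤ Real.exp (ε / (2 * A)) := by
    intro j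
    apply Real.exp_le_exp.mpr
    have h1 : lam j + r j ≤ 1 / (2 * A) := by linarith [hrlt j, hneg j]
    calc ε * (lam j + r j) ≤ ε * (1 / (2 * A)) := mul_le_mul_of_nonneg_left h1 hε.le
      _ = ε / (2 * A) := by ring
  have horder : ∀ i j : ℕ, lam i < lam j → u i ≤ l j := by
    intro i j hij'
    have hne : i ≠ j := fun h => absurd hij' (by rw [h]; exact lt_irrefl _)
    have h1 := hsep i j hne
    have h2 := hsep j i hne.symm
    rw [abs_of_neg (by linarith : lam i - lam j < 0)] at h1
    rw [abs_of_pos (by linarith : 0 < lam j - lam i)] at h2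
    apply Real.exp_le_exp.mpr
    have hri : r i ≤ (lam j - lam i) / 2 := by
      simp only [hr]
      have : Real.exp (ε * lam i) / (2 * A) = (Real.exp (ε * lam i) / A) / 2 := by ring
      rw [this]
      linarith
    have hrj : r j ≤ (lam j - lam i) / 2 := by
      simp only [hr]
      have : Real.exp (ε * lam j) / (2 * A) = (Real.exp (ε * lam j) / A) / 2 := by ring
      rw [this]
      linarith
    have : lam i + r i ≤ lam j - r j := by linarith
    nlinarith
  have hdisj : (↑F : Set ℕ).PairwiseDisjoint (fun j => Set.Ioo (l j) (u j)) := by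
    intro i _ j _ hij
    rcases lt_trichotomy (lam i) (lam j) with h | h | h
    · apply Set.disjoint_left.mpr
      intro x hxi hxj
      have := horder i j h
      have h1 := hxi.2
      have h2 := hxj.1
      simp only [Set.mem_Ioo] at *
      linarith
    · exfalso
      have h1 := hsep i j hij
      rw [h, sub_self, abs_zero] at h1
      exact absurd h1 (not_le.mpr (div_pos (Real.exp_pos _) hA))
    · apply Set.disjoint_left.mpr
      intro x hxi hxj
      have := horder j i h
      simp only [Set.mem_Ioo] at *
      linarith
  have hmeas : ∑ j ∈ F, volume (Set.Ioo (l j) (u j)) ≤ ENNReal.ofReal (Real.exp (ε / (2 * A))) := by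
    rw [← measure_biUnion_finset hdisj (fun j _ => measurableSet_Ioo)]
    calc volume (⋃ j ∈ F, Set.Ioo (l j) (u j)) ≤ volume (Set.Ioo 0 (Real.exp (ε / (2 * A)))) := by
          apply measure_mono
          intro x hx
          simp only [Set.mem_iUnion, Set.mem_Ioo] at hx ⊢
          obtain ⟨j, _, hx1, hx2⟩ := hx
          exact ⟨lt_trans (Real.exp_pos _) hx1, lt_of_lt_of_le hx2 (hub j)⟩
      _ = ENNReal.ofReal (Real.exp (ε / (2 * A))) := by rw [Real.volume_Ioo, sub_zero]
  have hreal : ∑ j ∈ F, (u j - l j) ≤ Real.exp (ε / (2 * A)) := by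
    rw [← ENNReal.ofReal_le_ofReal_iff (Real.exp_pos _).le,
      ENNReal.ofReal_sum_of_nonneg (fun j _ => by linarith [hlu j])]
    simp_rw [← Real.volume_Ioo]
    exact hmeas
  have hterm : ∀ j, Real.exp (2 * ε * lam j) ≤ (2 * A / ε) * (u j - l j) := by
    intro j
    have hu' : u j = Real.exp (ε * lam j) * Real.exp (ε * r j) := by
      rw [hu, ← Real.exp_add]; ring_nf
    have hl' : l j = Real.exp (ε * lam j) * Real.exp (-(ε * r j)) := by
      rw [hl, ← Real.exp_add]; ring_nf
    have e1 : 1 + ε * r j ≤ Real.exp (ε * r j) := by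
      linarith [Real.add_one_le_exp (ε * r j)]
    have e2 : Real.exp (-(ε * r j)) ≤ 1 := by
      rw [← Real.exp_zero]
      apply Real.exp_le_exp.mpr
      nlinarith [hrpos j]
    have h1 : Real.exp (ε * lam j) * (ε * r j) ≤ u j - l j := by
      rw [hu', hl']
      nlinarith [Real.exp_pos (ε * lam j), hrpos j]
    have h2 : Real.exp (ε * lam j) * (ε * r j) = (ε / (2 * A)) * Real.exp (2 * ε * lam j) := by
      rw [hr]
      simp only
      rw [show 2 * ε * lam j = ε * lam j + ε * lam j by ring, Real.exp_add]
      field_simp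
    rw [h2] at h1
    calc Real.exp (2 * ε * lam j)
        = (2 * A / ε) * ((ε / (2 * A)) * Real.exp (2 * ε * lam j)) := by field_simp
      _ ≤ (2 * A / ε) * (u j - l j) := by
          apply mul_le_mul_of_nonneg_left h1 (by positivity)
  calc ∑ j ∈ F, Real.exp (2 * ε * lam j) ≤ ∑ j ∈ F, (2 * A / ε) * (u j - l j) :=
        Finset.sum_le_sum (fun j _ => hterm j)
    _ = (2 * A / ε) * ∑ j ∈ F, (u j - l j) := by rw [Finset.mul_sum]
    _ ≤ (2 * A / ε) * Real.exp (ε / (2 * A)) := mul_le_mul_of_nonneg_left hreal (by positivity)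
    _ = 2 * A * Real.exp (ε / (2 * A)) / ε := by ring

set_option maxHeartbeats 1000000 in
/-- Key estimate of Theorem 2: if `(q_j)` is biorthogonal to `(e^{λ_j t})` on `[0,t₁]` and
`‖q_j‖ ≤ K_ε e^{−λ_j ε}` for every `ε > 0`, with `t₁` beyond the abscissa
`σ_c = lim 2 ln|b_j|/λ_j`, then `{(q_j(t₁−t)/b_j) e^{λ_j t₁}}` is a Bessel sequence. -/
theorem biorthogonal_family_is_bessel
    (lam : ℕ → ℝ) (hlam : ∀ j, lam j < 0)
    (b : ℕ → ℝ) (hb : ∀ j, b j ≠ 0)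
    (σc : ℝ)
    (hσc : Tendsto (fun j : ℕ => 2 * Real.log |b j| / lam j) atTop (nhds σc))
    (t₁ : ℝ) (ht₁pos : 0 < t₁) (ht₁ : σc < t₁)
    (q : ℕ → ℝ → ℝ)
    (hqL2 : ∀ j, MemLp (q j) 2 (volume.restrict (Set.Icc 0 t₁)))
    (hbiorth : ∀ i j : ℕ,
      (∫ t in (0:ℝ)..t₁, Real.exp (lam i * t) * q j t) = if i = j then 1 else 0)
    (hest : ∀ ε : ℝ, 0 < ε → ∃ K : ℝ, 0 < K ∧ ∀ j : ℕ,
      (∫ t in (0:ℝ)..t₁, (q j t)^2) ^ (1/2 : ℝ) ≤ K * Real.exp (-(lam j) * ε)) :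
    ∃ M : ℝ, 0 < M ∧ ∀ (F : Finset ℕ) (β : ℕ → ℝ),
      (∫ t in (0:ℝ)..t₁,
        (∑ j ∈ F, β j * (q j (t₁ - t) / b j) * Real.exp (lam j * t₁))^2)
      ≤ M^2 * ∑ j ∈ F, (β j)^2 := by
  classical
  have h2t : 0 < 2 * t₁ - σc := by linarith
  set ε : ℝ := min (t₁ / 2) ((2 * t₁ - σc) / 8) with hεdef
  have hε : 0 < ε := lt_min (by linarith) (by linarith)
  have hε8 : ε ≤ (2 * t₁ - σc) / 8 := min_le_right _ _
  obtain ⟨K, hK, hKest⟩ := hest ε hε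
  set μ := volume.restrict (Set.Ioc (0:ℝ) t₁) with hμ
  haveI : IsFiniteMeasure μ := by
    constructor
    rw [hμ, Measure.restrict_apply_univ, Real.volume_Ioc]
    exact ENNReal.ofReal_lt_top
  have hq2 : ∀ j, MemLp (q j) 2 μ := fun j =>
    (hqL2 j).mono_measure (Measure.restrict_mono Set.Ioc_subset_Icc_self le_rfl)
  -- the L² norms of the q's
  set Nq : ℕ → ℝ := fun j => Real.sqrt (∫ x, (q j x)^2 ∂μ) with hNqdef
  have hNq0 : ∀ j, 0 ≤ Nq j := fun j => Real.sqrt_nonneg _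
  have hNle : ∀ j, Nq j ≤ K * Real.exp (-(lam j) * ε) := by
    intro j
    have h := hKest j
    rw [intervalIntegral.integral_of_le ht₁pos.le, ← hμ] at h
    simp only [hNqdef]
    rw [Real.sqrt_eq_rpow]
    exact h
  -- the exponentials are in L²
  have he2 : ∀ i, MemLp (fun t => Real.exp (lam i * t)) 2 μ := by
    intro i
    refine MemLp.of_bound ?_ 1 ?_
    · exact Continuous.aestronglyMeasurable (by continuity)
    rw [hμ]
    filter_upwards [ae_restrict_mem measurableSet_Ioc] with t ht
    rw [Real.norm_eq_abs, abs_of_pos (Real.exp_pos _)]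
    calc Real.exp (lam i * t) ≤ Real.exp 0 := by
          apply Real.exp_le_exp.mpr
          nlinarith [(hlam i).le, ht.1.le]
      _ = 1 := Real.exp_zero
  have hbi : ∀ i j, ∫ x, Real.exp (lam i * x) * q j x ∂μ = if i = j then 1 else 0 := by
    intro i j
    rw [hμ, ← intervalIntegral.integral_of_le ht₁pos.le]
    exact hbiorth i j
  -- separation of the lam's
  set A : ℝ := K * Real.sqrt (t₁ ^ 3 / 3) with hAdef
  have hApos : 0 < A := mul_pos hK (Real.sqrt_pos.mpr (by positivity))
  have hsep : ∀ i j, i ≠ j → Real.exp (ε * lam j) / A ≤ |lam i - lam j| := by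
    intro i j hij
    have hint1 : Integrable (fun x => Real.exp (lam j * x) * q j x) μ :=
      aux_integrable_mul (he2 j) (hq2 j)
    have hint2 : Integrable (fun x => Real.exp (lam i * x) * q j x) μ :=
      aux_integrable_mul (he2 i) (hq2 j)
    have hdmem : MemLp (fun x => Real.exp (lam j * x) - Real.exp (lam i * x)) 2 μ :=
      (he2 j).sub (he2 i)
    have hone : ∫ x, (Real.exp (lam j * x) - Real.exp (lam i * x)) * q j x ∂μ = 1 := by
      have heq : (fun x => (Real.exp (lam j * x) - Real.exp (lam i * x)) * q j x)
          = fun x => Real.exp (lam j * x) * q j x - Real.exp (lam i * x) * q j x := by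
        funext x; ring
      rw [heq, integral_sub hint1 hint2, hbi j j, hbi i j, if_pos rfl, if_neg hij]
      ring
    have hcs := aux_integral_cs hdmem (hq2 j)
    rw [hone] at hcs
    have hdiffsq : ∫ x, (Real.exp (lam j * x) - Real.exp (lam i * x))^2 ∂μ
        ≤ (lam i - lam j)^2 * (t₁ ^ 3 / 3) := by
      have hlhs : IntegrableOn (fun x => (Real.exp (lam j * x) - Real.exp (lam i * x))^2)
          (Set.Ioc 0 t₁) volume := by
        rw [← hμ] at *
        exact hdmem.integrable_sq
      have hrhs : IntegrableOn (fun x : ℝ => (lam i - lam j)^2 * x^2) (Set.Ioc 0 t₁) volume :=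
        (continuous_const.mul (continuous_pow 2)).integrableOn_Ioc
      rw [hμ]
      calc ∫ x in Set.Ioc 0 t₁, (Real.exp (lam j * x) - Real.exp (lam i * x))^2
          ≤ ∫ x in Set.Ioc 0 t₁, (lam i - lam j)^2 * x^2 := by
            apply setIntegral_mono_on hlhs hrhs measurableSet_Ioc
            intro t ht
            have hb1 : |Real.exp (lam j * t) - Real.exp (lam i * t)| ≤ |lam j * t - lam i * t| :=
              aux_exp_lipschitz (by nlinarith [(hlam j).le, ht.1.le])
                (by nlinarith [(hlam i).le, ht.1.le])
            calc (Real.exp (lam j * t) - Real.exp (lam i * t))^2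
                = |Real.exp (lam j * t) - Real.exp (lam i * t)|^2 := (sq_abs _).symm
              _ ≤ |lam j * t - lam i * t|^2 := by
                  apply pow_le_pow_left₀ (abs_nonneg _) hb1
              _ = (lam i - lam j)^2 * t^2 := by rw [sq_abs]; ring
        _ = (lam i - lam j)^2 * (t₁ ^ 3 / 3) := by
            rw [← intervalIntegral.integral_of_le ht₁pos.le,
              intervalIntegral.integral_const_mul, integral_pow]
            norm_num
    have hsq : Real.sqrt (∫ x, (Real.exp (lam j * x) - Real.exp (lam i * x))^2 ∂μ)
        ≤ |lam i - lam j| * Real.sqrt (t₁ ^ 3 / 3) := by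
      calc Real.sqrt (∫ x, (Real.exp (lam j * x) - Real.exp (lam i * x))^2 ∂μ)
          ≤ Real.sqrt ((lam i - lam j)^2 * (t₁ ^ 3 / 3)) := Real.sqrt_le_sqrt hdiffsq
        _ = |lam i - lam j| * Real.sqrt (t₁ ^ 3 / 3) := by
            rw [Real.sqrt_mul (sq_nonneg _), Real.sqrt_sq_eq_abs]
    have h1 : (1:ℝ) ≤ |lam i - lam j| * Real.sqrt (t₁ ^ 3 / 3) * (K * Real.exp (-(lam j) * ε)) := by
      calc (1:ℝ) ≤ Real.sqrt (∫ x, (Real.exp (lam j * x) - Real.exp (lam i * x))^2 ∂μ) * Nq j :=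
            hcs
        _ ≤ (|lam i - lam j| * Real.sqrt (t₁ ^ 3 / 3)) * (K * Real.exp (-(lam j) * ε)) :=
            mul_le_mul hsq (hNle j) (hNq0 j) (by positivity)
    rw [div_le_iff₀ hApos]
    have hE : Real.exp (ε * lam j) * Real.exp (-(lam j) * ε) = 1 := by
      rw [← Real.exp_add]
      rw [show ε * lam j + -(lam j) * ε = 0 by ring]
      exact Real.exp_zero
    calc Real.exp (ε * lam j) = Real.exp (ε * lam j) * 1 := (mul_one _).symm
      _ ≤ Real.exp (ε * lam j) *
          (|lam i - lam j| * Real.sqrt (t₁ ^ 3 / 3) * (K * Real.exp (-(lam j) * ε))) :=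
          mul_le_mul_of_nonneg_left h1 (Real.exp_pos _).le
      _ = (|lam i - lam j| * (K * Real.sqrt (t₁ ^ 3 / 3))) *
          (Real.exp (ε * lam j) * Real.exp (-(lam j) * ε)) := by ring
      _ = |lam i - lam j| * A := by rw [hE, hAdef]; ring
  have hpack := aux_packing hε hApos hlam hsep
  -- eventual bound from the abscissa hypothesis
  have hev : ∀ᶠ j in atTop, 2 * Real.log |b j| / lam j < 2 * t₁ - 4 * ε :=
    hσc.eventually_lt_const (by linarith)
  obtain ⟨N, hN⟩ := eventually_atTop.mp hev
  -- weights
  set D : ℕ → ℝ := fun j => Real.exp (lam j * t₁) * Nq j / |b j| with hDdef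
  have hD0 : ∀ j, 0 ≤ D j := by
    intro j
    apply div_nonneg _ (abs_nonneg _)
    exact mul_nonneg (Real.exp_pos _).le (hNq0 j)
  have hDW : ∀ j, (D j)^2 ≤ K^2 * Real.exp (2 * (t₁ - ε) * lam j) / (b j)^2 := by
    intro j
    have hkey : Real.exp (lam j * t₁)^2 * (K * Real.exp (-(lam j) * ε))^2
        = K^2 * Real.exp (2 * (t₁ - ε) * lam j) := by
      calc Real.exp (lam j * t₁)^2 * (K * Real.exp (-(lam j) * ε))^2
          = K^2 * (Real.exp (lam j * t₁) * Real.exp (lam j * t₁)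
            * (Real.exp (-(lam j) * ε) * Real.exp (-(lam j) * ε))) := by ring
        _ = K^2 * Real.exp (lam j * t₁ + lam j * t₁ + (-(lam j) * ε + -(lam j) * ε)) := by
            rw [← Real.exp_add, ← Real.exp_add, ← Real.exp_add]
        _ = K^2 * Real.exp (2 * (t₁ - ε) * lam j) := by
            rw [show lam j * t₁ + lam j * t₁ + (-(lam j) * ε + -(lam j) * ε)
              = 2 * (t₁ - ε) * lam j by ring]
    have h2 : (Nq j)^2 ≤ (K * Real.exp (-(lam j) * ε))^2 :=
      pow_le_pow_left₀ (hNq0 j) (hNle j) 2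
    have h1 : (D j)^2 = Real.exp (lam j * t₁)^2 * (Nq j)^2 / (b j)^2 := by
      simp only [hDdef]
      rw [div_pow, mul_pow, sq_abs]
    rw [h1, ← hkey]
    apply div_le_div_of_nonneg_right ?_ (by positivity)
    · exact mul_le_mul_of_nonneg_left h2 (sq_nonneg _)
  have hDe : ∀ j, N ≤ j → (D j)^2 ≤ K^2 * Real.exp (2 * ε * lam j) := by
    intro j hj
    refine (hDW j).trans ?_
    have hbj : (b j)^2 = Real.exp (2 * Real.log |b j|) := by
      rw [show (2:ℝ) * Real.log |b j| = Real.log |b j| + Real.log |b j| by ring,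
        Real.exp_add, Real.exp_log (abs_pos.mpr (hb j)), abs_mul_abs_self, ← pow_two]
    have hexp : K^2 * Real.exp (2 * (t₁ - ε) * lam j) / (b j)^2
        = K^2 * Real.exp (2 * (t₁ - ε) * lam j - 2 * Real.log |b j|) := by
      rw [hbj, mul_div_assoc, ← Real.exp_sub]
    rw [hexp]
    apply mul_le_mul_of_nonneg_left _ (sq_nonneg K)
    apply Real.exp_le_exp.mpr
    have hρ := hN j hj
    rw [div_lt_iff_of_neg (hlam j)] at hρ
    nlinarith
  set S₀ : ℝ := 2 * A * Real.exp (ε / (2 * A)) / ε with hS₀def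
  have hS₀0 : 0 ≤ S₀ := by positivity
  set T : ℝ := ∑ j ∈ Finset.range N, K^2 * Real.exp (2 * (t₁ - ε) * lam j) / (b j)^2 with hTdef
  have hT0 : 0 ≤ T := Finset.sum_nonneg (fun j _ => by positivity)
  have hsum : ∀ G : Finset ℕ, ∑ j ∈ G, (D j)^2 ≤ T + K^2 * S₀ := by
    intro G
    rw [← Finset.sum_filter_add_sum_filter_not G (fun j => j < N)]
    have hp1 : ∑ j ∈ G.filter (fun j => j < N), (D j)^2 ≤ T := by
      calc ∑ j ∈ G.filter (fun j => j < N), (D j)^2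
          ≤ ∑ j ∈ G.filter (fun j => j < N),
            K^2 * Real.exp (2 * (t₁ - ε) * lam j) / (b j)^2 :=
            Finset.sum_le_sum (fun j _ => hDW j)
        _ ≤ T := by
            rw [hTdef]
            apply Finset.sum_le_sum_of_subset_of_nonneg
            · intro j hj
              exact Finset.mem_range.mpr (Finset.mem_filter.mp hj).2
            · intro j _ _
              positivity
    have hp2 : ∑ j ∈ G.filter (fun j => ¬ j < N), (D j)^2 ≤ K^2 * S₀ := by
      calc ∑ j ∈ G.filter (fun j => ¬ j < N), (D j)^2
          ≤ ∑ j ∈ G.filter (fun j => ¬ j < N), K^2 * Real.exp (2 * ε * lam j) :=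
            Finset.sum_le_sum (fun j hj =>
              hDe j (le_of_not_gt (Finset.mem_filter.mp hj).2))
        _ = K^2 * ∑ j ∈ G.filter (fun j => ¬ j < N), Real.exp (2 * ε * lam j) := by
            rw [Finset.mul_sum]
        _ ≤ K^2 * S₀ := mul_le_mul_of_nonneg_left (hpack _) (sq_nonneg K)
    linarith
  refine ⟨Real.sqrt (T + K^2 * S₀) + 1, by positivity, ?_⟩
  intro F β
  have hM2 : T + K^2 * S₀ ≤ (Real.sqrt (T + K^2 * S₀) + 1)^2 := by
    have h := Real.sq_sqrt (by positivity : (0:ℝ) ≤ T + K^2 * S₀)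
    nlinarith [Real.sqrt_nonneg (T + K^2 * S₀)]
  have hrefl : (∫ t in (0:ℝ)..t₁,
        (∑ j ∈ F, β j * (q j (t₁ - t) / b j) * Real.exp (lam j * t₁))^2)
      = ∫ s in (0:ℝ)..t₁, (∑ j ∈ F, β j * (q j s / b j) * Real.exp (lam j * t₁))^2 := by
    have h := intervalIntegral.integral_comp_sub_left (a := (0:ℝ)) (b := t₁)
      (fun s => (∑ j ∈ F, β j * (q j s / b j) * Real.exp (lam j * t₁))^2) t₁
    simpa using h
  rw [hrefl, intervalIntegral.integral_of_le ht₁pos.le, ← hμ]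
  have hGmem : ∀ j, MemLp (fun s => β j * (q j s / b j) * Real.exp (lam j * t₁)) 2 μ := by
    intro j
    have heq : (fun s => β j * (q j s / b j) * Real.exp (lam j * t₁))
        = fun s => (β j * Real.exp (lam j * t₁) / b j) * q j s := by
      funext s; ring
    rw [heq]
    exact (hq2 j).const_mul _
  have hexp : ∫ x, (∑ j ∈ F, β j * (q j x / b j) * Real.exp (lam j * t₁))^2 ∂μ
      = ∑ i ∈ F, ∑ j ∈ F, ∫ x, (β i * (q i x / b i) * Real.exp (lam i * t₁))
        * (β j * (q j x / b j) * Real.exp (lam j * t₁)) ∂μ := by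
    have h1 : ∀ x : ℝ, (∑ j ∈ F, β j * (q j x / b j) * Real.exp (lam j * t₁))^2
        = ∑ i ∈ F, ∑ j ∈ F, (β i * (q i x / b i) * Real.exp (lam i * t₁))
          * (β j * (q j x / b j) * Real.exp (lam j * t₁)) := by
      intro x
      rw [pow_two, Finset.sum_mul_sum]
    rw [integral_congr_ae (Filter.Eventually.of_forall h1)]
    rw [integral_finset_sum _ (fun i _ => integrable_finset_sum _
      (fun j _ => aux_integrable_mul (hGmem i) (hGmem j)))]
    exact Finset.sum_congr rfl (fun i _ => integral_finset_sum _
      (fun j _ => aux_integrable_mul (hGmem i) (hGmem j)))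
  have hGnorm : ∀ j, Real.sqrt (∫ x, (β j * (q j x / b j) * Real.exp (lam j * t₁))^2 ∂μ)
      = |β j| * D j := by
    intro j
    have h1 : (fun x => (β j * (q j x / b j) * Real.exp (lam j * t₁))^2)
        = fun x => (β j * Real.exp (lam j * t₁) / b j)^2 * (q j x)^2 := by
      funext x; ring
    rw [h1, integral_const_mul, Real.sqrt_mul (sq_nonneg _), Real.sqrt_sq_eq_abs]
    simp only [hDdef, hNqdef]
    rw [abs_div, abs_mul, abs_of_pos (Real.exp_pos _)]
    field_simp
  have hterm : ∀ i j : ℕ, ∫ x, (β i * (q i x / b i) * Real.exp (lam i * t₁))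
      * (β j * (q j x / b j) * Real.exp (lam j * t₁)) ∂μ ≤ (|β i| * D i) * (|β j| * D j) := by
    intro i j
    calc ∫ x, (β i * (q i x / b i) * Real.exp (lam i * t₁))
        * (β j * (q j x / b j) * Real.exp (lam j * t₁)) ∂μ
        ≤ Real.sqrt (∫ x, (β i * (q i x / b i) * Real.exp (lam i * t₁))^2 ∂μ)
          * Real.sqrt (∫ x, (β j * (q j x / b j) * Real.exp (lam j * t₁))^2 ∂μ) :=
          aux_integral_cs (hGmem i) (hGmem j)
      _ = (|β i| * D i) * (|β j| * D j) := by rw [hGnorm i, hGnorm j]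
  calc ∫ x, (∑ j ∈ F, β j * (q j x / b j) * Real.exp (lam j * t₁))^2 ∂μ
      = ∑ i ∈ F, ∑ j ∈ F, ∫ x, (β i * (q i x / b i) * Real.exp (lam i * t₁))
        * (β j * (q j x / b j) * Real.exp (lam j * t₁)) ∂μ := hexp
    _ ≤ ∑ i ∈ F, ∑ j ∈ F, (|β i| * D i) * (|β j| * D j) :=
        Finset.sum_le_sum (fun i _ => Finset.sum_le_sum (fun j _ => hterm i j))
    _ = (∑ j ∈ F, |β j| * D j)^2 := by rw [pow_two, Finset.sum_mul_sum]
    _ ≤ (∑ j ∈ F, |β j|^2) * (∑ j ∈ F, (D j)^2) :=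
        Finset.sum_mul_sq_le_sq_mul_sq F (fun j => |β j|) D
    _ = (∑ j ∈ F, (β j)^2) * (∑ j ∈ F, (D j)^2) := by simp_rw [sq_abs]
    _ ≤ (∑ j ∈ F, (β j)^2) * (T + K^2 * S₀) :=
        mul_le_mul_of_nonneg_left (hsum F) (Finset.sum_nonneg (fun j _ => sq_nonneg _))
    _ ≤ (Real.sqrt (T + K^2 * S₀) + 1)^2 * ∑ j ∈ F, (β j)^2 := by
        rw [mul_comm]
        exact mul_le_mul_of_nonneg_right hM2 (Finset.sum_nonneg (fun j _ => sq_nonneg _))
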